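/- arXiv:2309.12758 — 3 statements merged into one kernel-verified Lean document; each statement's English description precedes it below -/
import Mathlib

section
/- Let Q, R be symmetric positive definite matrices and let P be a symmetric positive definite solution of the discrete algebraic Riccati equation P = AᵀPA − AᵀPB(R + BᵀPB)⁻¹BᵀPA + Q with associated gain K_f = −(R + BᵀPB)⁻¹BᵀPA. Then for every matrix G and every positive semidefinite Σ, the pair (P, K_f) minimizes tr(GᵀP̃GΣ) over all pairs (P̃, K) with P̃ ≻ 0 satisfying the Lyapunov-type inequality P̃ − Q − KᵀRK ⪰ (A+BK)ᵀP̃(A+BK). That is, any feasible (P̃, K) satisfies tr(GᵀP̃GΣ) ≥ tr(GᵀPGΣ). -/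
open Matrix


lemma dot_quad_conj {n p : ℕ} (L : Matrix (Fin p) (Fin n) ℝ) (M : Matrix (Fin p) (Fin p) ℝ)
    (y : Fin n → ℝ) : y ⬝ᵥ (Lᵀ * M * L) *ᵥ y = (L *ᵥ y) ⬝ᵥ M *ᵥ (L *ᵥ y) := by
  rw [← mulVec_mulVec, ← mulVec_mulVec, dotProduct_mulVec, vecMul_transpose]

lemma quad_upper {n : ℕ} (Δ : Matrix (Fin n) (Fin n) ℝ) :
    ∃ Mb : ℝ, 0 ≤ Mb ∧ ∀ y : Fin n → ℝ, |y ⬝ᵥ Δ *ᵥ y| ≤ Mb * (y ⬝ᵥ y) := by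
  refine ⟨∑ i, ∑ j, |Δ i j|, by positivity, fun y => ?_⟩
  have h1 : y ⬝ᵥ Δ *ᵥ y = ∑ i, ∑ j, y i * Δ i j * y j := by
    simp [dotProduct, mulVec, Finset.mul_sum, mul_assoc]
  rw [h1, Finset.sum_mul]
  refine (Finset.abs_sum_le_sum_abs _ _).trans (Finset.sum_le_sum fun i _ => ?_)
  rw [Finset.sum_mul]
  refine (Finset.abs_sum_le_sum_abs _ _).trans (Finset.sum_le_sum fun j _ => ?_)
  have hij : |y i| * |y j| ≤ y ⬝ᵥ y := by
    have h2 : 2 * (|y i| * |y j|) ≤ |y i| ^ 2 + |y j| ^ 2 := by nlinarith [two_mul_le_add_sq |y i| |y j|]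
    have h3 : |y i| ^ 2 ≤ y ⬝ᵥ y := by
      rw [sq_abs]
      have := Finset.single_le_sum (f := fun k => y k * y k)
        (fun k _ => mul_self_nonneg _) (Finset.mem_univ i)
      simpa [dotProduct, sq, ← sq] using this
    have h4 : |y j| ^ 2 ≤ y ⬝ᵥ y := by
      rw [sq_abs]
      have := Finset.single_le_sum (f := fun k => y k * y k)
        (fun k _ => mul_self_nonneg _) (Finset.mem_univ j)
      simpa [dotProduct, sq, ← sq] using this
    nlinarith
  calc |y i * Δ i j * y j| = |Δ i j| * (|y i| * |y j|) := by
        rw [abs_mul, abs_mul]; ring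
    _ ≤ |Δ i j| * (y ⬝ᵥ y) := by
        exact mul_le_mul_of_nonneg_left hij (abs_nonneg _)

lemma quad_lower {n : ℕ} {M : Matrix (Fin n) (Fin n) ℝ} (hM : M.PosDef) :
    ∃ d : ℝ, 0 < d ∧ ∀ y : Fin n → ℝ, d * (y ⬝ᵥ y) ≤ y ⬝ᵥ M *ᵥ y := by
  rcases Nat.eq_zero_or_pos n with h0 | hn
  · subst h0
    exact ⟨1, one_pos, fun y => by simp [dotProduct]⟩
  have hH := hM.1
  obtain ⟨i0, -, hi0⟩ := Finset.exists_min_image Finset.univ hH.eigenvalues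
    ⟨⟨0, hn⟩, Finset.mem_univ _⟩
  refine ⟨hH.eigenvalues i0, hM.eigenvalues_pos i0, fun y => ?_⟩
  set U : Matrix (Fin n) (Fin n) ℝ := (hH.eigenvectorUnitary : Matrix (Fin n) (Fin n) ℝ) with hU
  have hstar : star U = Uᵀ := conjTranspose_eq_transpose_of_trivial U
  have hUU : U * Uᵀ = 1 := by
    rw [← hstar]; exact (Matrix.mem_unitaryGroup_iff).mp hH.eigenvectorUnitary.2
  set z : Fin n → ℝ := Uᵀ *ᵥ y with hz
  have hzz : z ⬝ᵥ z = y ⬝ᵥ y := by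
    have := dot_quad_conj Uᵀ 1 y
    rw [transpose_transpose, mul_one, hUU] at this
    simpa using this.symm
  have hdiag : RCLike.ofReal ∘ hH.eigenvalues = hH.eigenvalues := by
    funext i; simp
  have hquad : y ⬝ᵥ M *ᵥ y = z ⬝ᵥ (diagonal hH.eigenvalues) *ᵥ z := by
    conv_lhs => rw [hH.spectral_theorem, Unitary.conjStarAlgAut_apply]
    rw [hdiag, ← hU, hstar]
    have := dot_quad_conj Uᵀ (diagonal hH.eigenvalues) y
    rw [transpose_transpose] at this
    rw [← this, mul_assoc]
  rw [hquad, ← hzz]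
  simp only [dotProduct, mulVec_diagonal, Finset.mul_sum]
  refine Finset.sum_le_sum fun i _ => ?_
  have h1 : hH.eigenvalues i0 * (z i * z i) ≤ hH.eigenvalues i * (z i * z i) :=
    mul_le_mul_of_nonneg_right (hi0 i (Finset.mem_univ i)) (mul_self_nonneg _)
  nlinarith [h1]

lemma psd_of_lyap {n : ℕ} {Δ Pt Q L : Matrix (Fin n) (Fin n) ℝ}
    (hherm : Δ.IsHermitian) (hPt : Pt.PosDef) (hQ : Q.PosDef)
    (h1 : ∀ y : Fin n → ℝ,
      (L *ᵥ y) ⬝ᵥ Pt *ᵥ (L *ᵥ y) + y ⬝ᵥ Q *ᵥ y ≤ y ⬝ᵥ Pt *ᵥ y)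
    (h2 : ∀ y : Fin n → ℝ, (L *ᵥ y) ⬝ᵥ Δ *ᵥ (L *ᵥ y) ≤ y ⬝ᵥ Δ *ᵥ y) :
    Δ.PosSemidef := by
  obtain ⟨Mb, hMb0, hMb⟩ := quad_upper Δ
  obtain ⟨dP, hdP, hPlow⟩ := quad_lower hPt
  obtain ⟨dQ, hdQ, hQlow⟩ := quad_lower hQ
  obtain ⟨CP, hCP0, hCP⟩ := quad_upper Pt
  have hdotself : ∀ y : Fin n → ℝ, 0 ≤ y ⬝ᵥ y := fun y =>
    Finset.sum_nonneg fun i _ => mul_self_nonneg _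
  have hPtnn : ∀ y : Fin n → ℝ, 0 ≤ y ⬝ᵥ Pt *ᵥ y := fun y =>
    le_trans (mul_nonneg hdP.le (hdotself y)) (hPlow y)
  set c : ℝ := min (dQ / (CP + 1)) 1 with hc
  have hc0 : 0 < c := lt_min (by positivity) one_pos
  have hc1 : c ≤ 1 := min_le_right _ _
  have hcineq : ∀ y : Fin n → ℝ, c * (y ⬝ᵥ Pt *ᵥ y) ≤ y ⬝ᵥ Q *ᵥ y := by
    intro y
    have e1 : y ⬝ᵥ Pt *ᵥ y ≤ (CP + 1) * (y ⬝ᵥ y) := by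
      have := (abs_le.mp (hCP y)).2
      nlinarith [hdotself y]
    have e2 : c ≤ dQ / (CP + 1) := min_le_left _ _
    have e3 : dQ * (y ⬝ᵥ y) ≤ y ⬝ᵥ Q *ᵥ y := hQlow y
    have e4 : c * (y ⬝ᵥ Pt *ᵥ y) ≤ (dQ / (CP + 1)) * ((CP + 1) * (y ⬝ᵥ y)) := by
      have := hPtnn y
      nlinarith
    have e5 : (dQ / (CP + 1)) * ((CP + 1) * (y ⬝ᵥ y)) = dQ * (y ⬝ᵥ y) := by
      field_simp
    linarith [e4, e5 ▸ e4]
  set S : Set ℝ := {t : ℝ | 0 ≤ t ∧ ∀ y : Fin n → ℝ,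
    0 ≤ y ⬝ᵥ Δ *ᵥ y + t * (y ⬝ᵥ Pt *ᵥ y)} with hS
  have hne : (Mb / dP) ∈ S := by
    refine ⟨by positivity, fun y => ?_⟩
    have e1 : -(Mb * (y ⬝ᵥ y)) ≤ y ⬝ᵥ Δ *ᵥ y := (abs_le.mp (hMb y)).1
    have e2 : dP * (y ⬝ᵥ y) ≤ y ⬝ᵥ Pt *ᵥ y := hPlow y
    have e3 : (Mb / dP) * (dP * (y ⬝ᵥ y)) ≤ (Mb / dP) * (y ⬝ᵥ Pt *ᵥ y) :=
      mul_le_mul_of_nonneg_left e2 (by positivity)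
    have e4 : (Mb / dP) * (dP * (y ⬝ᵥ y)) = Mb * (y ⬝ᵥ y) := by
      field_simp
    linarith
  have hbdd : BddBelow S := ⟨0, fun t ht => ht.1⟩
  have hclosed : IsClosed S := by
    have : S = {t : ℝ | 0 ≤ t} ∩ ⋂ y : Fin n → ℝ,
        {t : ℝ | 0 ≤ y ⬝ᵥ Δ *ᵥ y + t * (y ⬝ᵥ Pt *ᵥ y)} := by
      ext t; simp [hS, Set.mem_iInter]
    rw [this]
    refine (isClosed_le continuous_const continuous_id).inter
      (isClosed_iInter fun y => isClosed_le continuous_const ?_)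
    exact continuous_const.add (continuous_id.mul continuous_const)
  set t0 := sInf S with ht0
  have ht0mem : t0 ∈ S := hclosed.csInf_mem ⟨_, hne⟩ hbdd
  have ht00 : 0 ≤ t0 := ht0mem.1
  have hkey : t0 * (1 - c) ∈ S := by
    refine ⟨mul_nonneg ht00 (by linarith), fun y => ?_⟩
    have A1 := h1 y
    have A2 := h2 y
    have A3 := ht0mem.2 (L *ᵥ y)
    have A4 := hcineq y
    have B1 : t0 * ((L *ᵥ y) ⬝ᵥ Pt *ᵥ (L *ᵥ y) + y ⬝ᵥ Q *ᵥ y) ≤ t0 * (y ⬝ᵥ Pt *ᵥ y) :=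
      mul_le_mul_of_nonneg_left A1 ht00
    have B2 : t0 * (c * (y ⬝ᵥ Pt *ᵥ y)) ≤ t0 * (y ⬝ᵥ Q *ᵥ y) :=
      mul_le_mul_of_nonneg_left A4 ht00
    nlinarith [A2, A3, B1, B2]
  have hle : t0 ≤ t0 * (1 - c) := csInf_le hbdd hkey
  have ht0eq : t0 = 0 := by nlinarith
  refine PosSemidef.of_dotProduct_mulVec_nonneg hherm fun x => ?_
  have := ht0mem.2 x
  rw [ht0eq] at this
  simpa using this

lemma psd_trace_nonneg {n : ℕ} {Z : Matrix (Fin n) (Fin n) ℝ} (hZ : Z.PosSemidef) :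
    0 ≤ Z.trace := by
  rw [Matrix.trace]
  refine Finset.sum_nonneg fun i _ => ?_
  have := hZ.dotProduct_mulVec_nonneg (Pi.single i 1)
  simpa using this

lemma trace_mul_psd_nonneg {n : ℕ} {X Y : Matrix (Fin n) (Fin n) ℝ}
    (hX : X.PosSemidef) (hY : Y.PosSemidef) : 0 ≤ (X * Y).trace := by
  obtain ⟨C, rfl⟩ : ∃ C : Matrix (Fin n) (Fin n) ℝ, Y = Cᴴ * C := by
    open scoped MatrixOrder in
    exact CStarAlgebra.nonneg_iff_eq_star_mul_self.mp hY.nonneg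
  have h := psd_trace_nonneg (hX.mul_mul_conjTranspose_same C)
  calc (0:ℝ) ≤ (C * X * Cᴴ).trace := h
    _ = (X * (Cᴴ * C)).trace := by
        rw [Matrix.trace_mul_cycle, ← Matrix.mul_assoc, Matrix.trace_mul_comm, Matrix.mul_assoc]


/-- The DARE solution `P` with gain `K_f = −(R + BᵀPB)⁻¹BᵀPA` minimizes `tr(GᵀP̃GΣ)` over
all pairs `(P̃, K)` with `P̃ ≻ 0` satisfying the Lyapunov-type inequality
`P̃ − Q − KᵀRK ⪰ (A+BK)ᵀP̃(A+BK)`: any feasible `(P̃, K)` satisfies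
`tr(GᵀP̃GΣ) ≥ tr(GᵀPGΣ)` for every `G` and every `Σ ⪰ 0`. -/
theorem dare_solution_minimizes_trace
    {n m q : ℕ}
    (A P Q : Matrix (Fin n) (Fin n) ℝ)
    (B : Matrix (Fin n) (Fin m) ℝ)
    (R : Matrix (Fin m) (Fin m) ℝ)
    (Kf : Matrix (Fin m) (Fin n) ℝ)
    (hQ : Q.PosDef) (hR : R.PosDef) (hP : P.PosDef)
    (hDARE : P = Aᵀ * P * A - Aᵀ * P * B * (R + Bᵀ * P * B)⁻¹ * (Bᵀ * P * A) + Q)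
    (hKf : Kf = -((R + Bᵀ * P * B)⁻¹ * (Bᵀ * P * A)))
    (hOpt : ∀ K : Matrix (Fin m) (Fin n) ℝ,
      ((A + B * K)ᵀ * P * (A + B * K) - (P - Q - Kᵀ * R * K)).PosSemidef)
    (G : Matrix (Fin n) (Fin q) ℝ)
    (Sg : Matrix (Fin q) (Fin q) ℝ) (hSg : Sg.PosSemidef)
    (Pt : Matrix (Fin n) (Fin n) ℝ) (K : Matrix (Fin m) (Fin n) ℝ)
    (hPt : Pt.PosDef)
    (hfeas : (Pt - Q - Kᵀ * R * K - (A + B * K)ᵀ * Pt * (A + B * K)).PosSemidef) :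
    (Gᵀ * P * G * Sg).trace ≤ (Gᵀ * Pt * G * Sg).trace := by
  set L : Matrix (Fin n) (Fin n) ℝ := A + B * K with hL
  have hΔherm : (Pt - P).IsHermitian := hPt.1.sub hP.1
  have h1 : ∀ y : Fin n → ℝ,
      (L *ᵥ y) ⬝ᵥ Pt *ᵥ (L *ᵥ y) + y ⬝ᵥ Q *ᵥ y ≤ y ⬝ᵥ Pt *ᵥ y := by
    intro y
    have hf := hfeas.dotProduct_mulVec_nonneg y
    simp only [star_trivial, sub_mulVec, dotProduct_sub] at hf
    have e1 : y ⬝ᵥ (Kᵀ * R * K) *ᵥ y = (K *ᵥ y) ⬝ᵥ R *ᵥ (K *ᵥ y) := dot_quad_conj K R y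
    have e2 : y ⬝ᵥ (Lᵀ * Pt * L) *ᵥ y = (L *ᵥ y) ⬝ᵥ Pt *ᵥ (L *ᵥ y) := dot_quad_conj L Pt y
    have hR0 : 0 ≤ (K *ᵥ y) ⬝ᵥ R *ᵥ (K *ᵥ y) := by
      simpa using hR.posSemidef.dotProduct_mulVec_nonneg (K *ᵥ y)
    rw [e1, e2] at hf
    linarith
  have h2 : ∀ y : Fin n → ℝ,
      (L *ᵥ y) ⬝ᵥ (Pt - P) *ᵥ (L *ᵥ y) ≤ y ⬝ᵥ (Pt - P) *ᵥ y := by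
    intro y
    have hf := hfeas.dotProduct_mulVec_nonneg y
    have ho := (hOpt K).dotProduct_mulVec_nonneg y
    simp only [star_trivial, sub_mulVec, dotProduct_sub] at hf ho ⊢
    have e1 : y ⬝ᵥ (Kᵀ * R * K) *ᵥ y = (K *ᵥ y) ⬝ᵥ R *ᵥ (K *ᵥ y) := dot_quad_conj K R y
    have e2 : y ⬝ᵥ (Lᵀ * Pt * L) *ᵥ y = (L *ᵥ y) ⬝ᵥ Pt *ᵥ (L *ᵥ y) := dot_quad_conj L Pt y
    have e3 : y ⬝ᵥ (Lᵀ * P * L) *ᵥ y = (L *ᵥ y) ⬝ᵥ P *ᵥ (L *ᵥ y) := dot_quad_conj L P y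
    rw [e1, e2] at hf
    rw [e1, e3] at ho
    linarith
  have hΔ : (Pt - P).PosSemidef := psd_of_lyap hΔherm hPt hQ h1 h2
  have hGpsd : (Gᵀ * (Pt - P) * G).PosSemidef := by
    have := hΔ.conjTranspose_mul_mul_same G
    simpa [conjTranspose_eq_transpose_of_trivial] using this
  have htr := trace_mul_psd_nonneg hGpsd hSg
  have heq : Gᵀ * (Pt - P) * G * Sg = Gᵀ * Pt * G * Sg - Gᵀ * P * G * Sg := by
    rw [Matrix.mul_sub, Matrix.sub_mul, Matrix.sub_mul]
  rw [heq, Matrix.trace_sub] at htr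
  linarith
end

section
/- Suppose a nonnegative function V on a set X satisfies c₁|x|² ≤ V(x) ≤ c₂|x|² + Nδ for constants c₁, c₂ > 0, N ≥ 1, δ ≥ 0, and that along a process V_{k+1} ≤ V_k − c₁|x_k|² + δ (in expectation). Then E[V(x_{k+1})] ≤ λ E[V(x_k)] + (1 + N c₁/c₂) δ with λ := 1 − c₁/c₂ ∈ (0,1), and hence E[ℓ-type bounds] c₁ E[|x_k|²] ≤ λ^k (c₂|x_0|² + Nδ) + (1 + N c₁/c₂)δ/(1−λ) for all k. -/
/-- Abstract mean-squared ISS bound. With `V k = E[V(x_k)]` and `s k = E[|x_k|²]`: if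
`c₁ s k ≤ V k ≤ c₂ s k + N δ` and `V (k+1) ≤ V k − c₁ s k + δ`, then
`V (k+1) ≤ λ V k + (1 + N c₁/c₂) δ` with `λ := 1 − c₁/c₂ ∈ (0,1)`, and hence
`c₁ s k ≤ λ^k (c₂ s 0 + N δ) + (1 + N c₁/c₂) δ/(1−λ)` for all `k`. -/
theorem mean_squared_iss_bound
    (V s : ℕ → ℝ) (c₁ c₂ N δ : ℝ)
    (hc₁ : 0 < c₁) (hc₂ : 0 < c₂) (hcc : c₁ < c₂) (hN : 1 ≤ N) (hδ : 0 ≤ δ)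
    (hs : ∀ k, 0 ≤ s k)
    (hlow : ∀ k, c₁ * s k ≤ V k)
    (hup : ∀ k, V k ≤ c₂ * s k + N * δ)
    (hdec : ∀ k, V (k + 1) ≤ V k - c₁ * s k + δ) :
    (0 < 1 - c₁ / c₂ ∧ 1 - c₁ / c₂ < 1) ∧
    (∀ k, V (k + 1) ≤ (1 - c₁ / c₂) * V k + (1 + N * c₁ / c₂) * δ) ∧
    (∀ k, c₁ * s k ≤ (1 - c₁ / c₂) ^ k * (c₂ * s 0 + N * δ)
        + (1 + N * c₁ / c₂) * δ / (1 - (1 - c₁ / c₂))) := by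
  have hrat : 0 < c₁ / c₂ := div_pos hc₁ hc₂
  have hrat1 : c₁ / c₂ < 1 := (div_lt_one hc₂).2 hcc
  have hlam0 : 0 < 1 - c₁ / c₂ := by linarith
  have hlam1 : 1 - c₁ / c₂ < 1 := by linarith
  have hδ' : 0 ≤ (1 + N * c₁ / c₂) * δ := by
    apply mul_nonneg _ hδ
    have : 0 ≤ N * c₁ / c₂ := by positivity
    linarith
  have hstep : ∀ k, V (k + 1) ≤ (1 - c₁ / c₂) * V k + (1 + N * c₁ / c₂) * δ := by
    intro k
    have h1 : (V k - N * δ) / c₂ ≤ s k := by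
      rw [div_le_iff₀ hc₂]
      nlinarith [hup k]
    have h2 : c₁ / c₂ * (V k - N * δ) ≤ c₁ * s k := by
      have := mul_le_mul_of_nonneg_left h1 hc₁.le
      calc c₁ / c₂ * (V k - N * δ) = c₁ * ((V k - N * δ) / c₂) := by ring
        _ ≤ c₁ * s k := this
    have := hdec k
    have hexp : (1 - c₁ / c₂) * V k + (1 + N * c₁ / c₂) * δ
        = V k - c₁ / c₂ * (V k - N * δ) + δ := by ring
    linarith
  refine ⟨⟨hlam0, hlam1⟩, hstep, ?_⟩
  have key : ∀ k, V k ≤ (1 - c₁ / c₂) ^ k * (c₂ * s 0 + N * δ)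
      + (1 + N * c₁ / c₂) * δ / (1 - (1 - c₁ / c₂)) := by
    intro k
    induction k with
    | zero =>
      simp only [pow_zero, one_mul]
      have : 0 ≤ (1 + N * c₁ / c₂) * δ / (1 - (1 - c₁ / c₂)) := by
        apply div_nonneg hδ'
        linarith
      linarith [hup 0]
    | succ k ih =>
      have h1 := hstep k
      have h2 := mul_le_mul_of_nonneg_left ih hlam0.le
      have h3 : (1 - c₁ / c₂) * ((1 + N * c₁ / c₂) * δ / (1 - (1 - c₁ / c₂)))
          + (1 + N * c₁ / c₂) * δ
          = (1 + N * c₁ / c₂) * δ / (1 - (1 - c₁ / c₂)) := by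
        field_simp
        rw [show c₂ - (c₂ - c₁) = c₁ by ring, div_add_one hc₁.ne', mul_div_assoc']; ring
      calc V (k + 1) ≤ (1 - c₁ / c₂) * V k + (1 + N * c₁ / c₂) * δ := h1
        _ ≤ (1 - c₁ / c₂) * ((1 - c₁ / c₂) ^ k * (c₂ * s 0 + N * δ)
            + (1 + N * c₁ / c₂) * δ / (1 - (1 - c₁ / c₂))) + (1 + N * c₁ / c₂) * δ := by
            linarith
        _ = (1 - c₁ / c₂) ^ (k + 1) * (c₂ * s 0 + N * δ)
            + ((1 - c₁ / c₂) * ((1 + N * c₁ / c₂) * δ / (1 - (1 - c₁ / c₂)))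
              + (1 + N * c₁ / c₂) * δ) := by ring
        _ = _ := by rw [h3]
  intro k
  exact (hlow k).trans (key k)
end

section
/- Let P, Q ⪰ 0 be symmetric with P − Q − K_fᵀRK_f ⪰ (A+BK_f)ᵀP(A+BK_f) for some K_f, R ⪰ 0. Let w be a zero-mean random vector with covariance Σ and x⁺ = (A+BK_f)x + Gw. Then E[V_f(x⁺)] − V_f(x) + ℓ(x, K_f x) ≤ tr(GᵀPGΣ), where V_f(x) = xᵀPx and ℓ(x,u) = xᵀQx + uᵀRu. -/
open Matrix MeasureTheory

private lemma dot_mulVec_eq {α β : Type*} [Fintype α] [Fintype β]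
    (N : Matrix α β ℝ) (u : α → ℝ) (z : β → ℝ) :
    u ⬝ᵥ N *ᵥ z = (Nᵀ *ᵥ u) ⬝ᵥ z := by
  rw [Matrix.dotProduct_mulVec, Matrix.mulVec_transpose]

private lemma quad_form_eq {α β : Type*} [Fintype α] [Fintype β]
    (P : Matrix α α ℝ) (G : Matrix α β ℝ) (z : β → ℝ) :
    z ⬝ᵥ (Gᵀ * P * G) *ᵥ z = (G *ᵥ z) ⬝ᵥ P *ᵥ (G *ᵥ z) := by
  rw [Matrix.mul_assoc, ← Matrix.mulVec_mulVec, dot_mulVec_eq,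
    Matrix.transpose_transpose, Matrix.mulVec_mulVec, ← Matrix.mulVec_mulVec]

private lemma expand_quad {n q : ℕ} (P : Matrix (Fin n) (Fin n) ℝ)
    (G : Matrix (Fin n) (Fin q) ℝ) (v : Fin n → ℝ) (z : Fin q → ℝ) :
    (v + G *ᵥ z) ⬝ᵥ P *ᵥ (v + G *ᵥ z)
      = v ⬝ᵥ P *ᵥ v
        + ((∑ i, ((Gᵀ *ᵥ (Pᵀ *ᵥ v)) i + (Gᵀ *ᵥ (P *ᵥ v)) i) * z i)
          + ∑ i, ∑ j, (Gᵀ * P * G) i j * (z i * z j)) := by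
  have h1 : v ⬝ᵥ P *ᵥ (G *ᵥ z) = ∑ i, (Gᵀ *ᵥ (Pᵀ *ᵥ v)) i * z i := by
    rw [Matrix.mulVec_mulVec, dot_mulVec_eq, Matrix.transpose_mul, ← Matrix.mulVec_mulVec]
    rfl
  have h2 : (G *ᵥ z) ⬝ᵥ P *ᵥ v = ∑ i, (Gᵀ *ᵥ (P *ᵥ v)) i * z i := by
    rw [dotProduct_comm, dot_mulVec_eq]
    rfl
  have h3 : (G *ᵥ z) ⬝ᵥ P *ᵥ (G *ᵥ z) = ∑ i, ∑ j, (Gᵀ * P * G) i j * (z i * z j) := by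
    rw [← quad_form_eq]
    simp only [dotProduct, Matrix.mulVec, dotProduct, Finset.mul_sum]
    exact Finset.sum_congr rfl fun i _ => Finset.sum_congr rfl fun j _ => by ring
  rw [Matrix.mulVec_add, dotProduct_add, add_dotProduct,
    add_dotProduct, h1, h2, h3]
  simp only [add_mul]
  rw [Finset.sum_add_distrib]
  ring

/-- One-step expected cost-decrease inequality for the terminal control law: if
`P − Q − K_fᵀRK_f ⪰ (A+BK_f)ᵀP(A+BK_f)` (with `P, Q, R ⪰ 0`), `w` is a zero-mean random
vector with covariance `Σ`, and `x⁺ = (A+BK_f)x + Gw`, then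
`E[V_f(x⁺)] − V_f(x) + ℓ(x, K_f x) ≤ tr(GᵀPGΣ)`, where `V_f(y) = yᵀPy` and
`ℓ(x,u) = xᵀQx + uᵀRu`. -/
theorem terminal_cost_decrease
    {n m q : ℕ} {Ω : Type*} [MeasurableSpace Ω]
    (μ : Measure Ω) [IsProbabilityMeasure μ]
    (A P Q : Matrix (Fin n) (Fin n) ℝ)
    (B : Matrix (Fin n) (Fin m) ℝ)
    (R : Matrix (Fin m) (Fin m) ℝ)
    (G : Matrix (Fin n) (Fin q) ℝ)
    (Kf : Matrix (Fin m) (Fin n) ℝ)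
    (hP : P.PosSemidef) (hQ : Q.PosSemidef) (hR : R.PosSemidef)
    (hterm : (P - Q - Kfᵀ * R * Kf - (A + B * Kf)ᵀ * P * (A + B * Kf)).PosSemidef)
    (w : Ω → Fin q → ℝ)
    (hmeas : ∀ i, Measurable fun ω => w ω i)
    (hint1 : ∀ i, Integrable (fun ω => w ω i) μ)
    (hint2 : ∀ i j, Integrable (fun ω => w ω i * w ω j) μ)
    (hmean : ∀ i, (∫ ω, w ω i ∂μ) = 0)
    (Sg : Matrix (Fin q) (Fin q) ℝ)
    (hSg : ∀ i j, Sg i j = ∫ ω, w ω i * w ω j ∂μ)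
    (x : Fin n → ℝ) :
    (∫ ω, ((A + B * Kf).mulVec x + G.mulVec (w ω)) ⬝ᵥ
        P.mulVec ((A + B * Kf).mulVec x + G.mulVec (w ω)) ∂μ)
      - x ⬝ᵥ P.mulVec x
      + (x ⬝ᵥ Q.mulVec x + (Kf.mulVec x) ⬝ᵥ R.mulVec (Kf.mulVec x))
      ≤ (Gᵀ * P * G * Sg).trace := by
  set v : Fin n → ℝ := (A + B * Kf).mulVec x with hv
  set M : Matrix (Fin q) (Fin q) ℝ := Gᵀ * P * G with hM
  set a : Fin q → ℝ := fun i => (Gᵀ *ᵥ (Pᵀ *ᵥ v)) i + (Gᵀ *ᵥ (P *ᵥ v)) i with ha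
  -- integrability of the pieces
  have i1 : Integrable (fun ω => ∑ i, a i * w ω i) μ :=
    integrable_finset_sum _ fun i _ => (hint1 i).const_mul (a i)
  have i2 : Integrable (fun ω => ∑ i, ∑ j, M i j * (w ω i * w ω j)) μ :=
    integrable_finset_sum _ fun i _ =>
      integrable_finset_sum _ fun j _ => (hint2 i j).const_mul (M i j)
  -- compute the integral
  have hint : (∫ ω, (v + G *ᵥ (w ω)) ⬝ᵥ P *ᵥ (v + G *ᵥ (w ω)) ∂μ)
      = v ⬝ᵥ P *ᵥ v + ∑ i, ∑ j, M i j * Sg i j := by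
    have : (∫ ω, (v + G *ᵥ (w ω)) ⬝ᵥ P *ᵥ (v + G *ᵥ (w ω)) ∂μ)
        = ∫ ω, (v ⬝ᵥ P *ᵥ v
            + ((∑ i, a i * w ω i) + ∑ i, ∑ j, M i j * (w ω i * w ω j))) ∂μ := by
      refine integral_congr_ae (Filter.Eventually.of_forall fun ω => ?_)
      exact expand_quad P G v (w ω)
    have i12 : Integrable (fun ω => (∑ i, a i * w ω i)
        + ∑ i, ∑ j, M i j * (w ω i * w ω j)) μ := i1.add i2
    rw [this, integral_add (integrable_const _) i12, integral_add i1 i2,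
      integral_const, probReal_univ, smul_eq_mul, one_mul]
    have e1 : (∫ ω, ∑ i, a i * w ω i ∂μ) = 0 := by
      rw [integral_finset_sum _ fun i _ => (hint1 i).const_mul (a i)]
      simp [integral_const_mul, hmean]
    have e2 : (∫ ω, ∑ i, ∑ j, M i j * (w ω i * w ω j) ∂μ)
        = ∑ i, ∑ j, M i j * Sg i j := by
      rw [integral_finset_sum _ fun i _ =>
        integrable_finset_sum _ fun j _ => (hint2 i j).const_mul (M i j)]
      refine Finset.sum_congr rfl fun i _ => ?_
      rw [integral_finset_sum _ fun j _ => (hint2 i j).const_mul (M i j)]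
      exact Finset.sum_congr rfl fun j _ => by rw [integral_const_mul, hSg]
    rw [e1, e2, zero_add]
  -- trace identity
  have htr : (M * Sg).trace = ∑ i, ∑ j, M i j * Sg i j := by
    have hsym : ∀ i j, Sg j i = Sg i j := fun i j => by
      rw [hSg, hSg]
      exact integral_congr_ae (Filter.Eventually.of_forall fun ω => mul_comm _ _)
    simp only [Matrix.trace, Matrix.diag, Matrix.mul_apply]
    exact Finset.sum_congr rfl fun i _ => Finset.sum_congr rfl fun j _ => by rw [hsym]
  -- PSD inequality
  have hpsd : 0 ≤ x ⬝ᵥ P *ᵥ x - x ⬝ᵥ Q *ᵥ x - (Kf *ᵥ x) ⬝ᵥ R *ᵥ (Kf *ᵥ x)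
      - v ⬝ᵥ P *ᵥ v := by
    have h := hterm.dotProduct_mulVec_nonneg x
    simp only [Matrix.sub_mulVec, dotProduct_sub, star_trivial] at h
    rwa [quad_form_eq R Kf x, quad_form_eq P (A + B * Kf) x] at h
  rw [hint, htr]
  linarith
end
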